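/- Let T be a standard Young tableau of shape λ with descent set {i₁ < ... < i_{r-1}}, and T' the SSYT obtained by replacing the entries in (i_{j-1}, i_j] with j (setting i₀ = 0, i_r = |λ|). Then for each j ∈ {1,...,r-1}, the rightmost box of T' containing entry j does not lie in a column strictly to the left of the leftmost box of T' containing entry j+1. -/

import Mathlib

def IsPartition (r : ℕ) (μ : ℕ → ℕ) : Prop :=
  (∀ i j, i ≤ j → μ j ≤ μ i) ∧ ∀ i, r ≤ i → μ i = 0

def ZeroOutside (μ : ℕ → ℕ) (T : ℕ → ℕ → ℕ) : Prop :=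
  ∀ i j, ¬ j < μ i → T i j = 0

/-- A semistandard filling of the Young diagram of `μ` (cells `(i,j)` with `j < μ i`)
with entries in `{1,…,r}`: weakly increasing along rows, strictly increasing down columns. -/
def IsSSYT (μ : ℕ → ℕ) (r : ℕ) (T : ℕ → ℕ → ℕ) : Prop :=
  (∀ i j, j < μ i → 1 ≤ T i j ∧ T i j ≤ r) ∧
  (∀ i j k, j ≤ k → k < μ i → T i j ≤ T i k) ∧
  (∀ i j, j < μ (i + 1) → T i j < T (i + 1) j)

/-- the `v`-weight: number of boxes of `μ` filled with entry `v`. -/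
noncomputable def wgt (μ : ℕ → ℕ) (T : ℕ → ℕ → ℕ) (v : ℕ) : ℕ :=
  {p : ℕ × ℕ | p.2 < μ p.1 ∧ T p.1 p.2 = v}.ncard

/-- A `(v)`-strip of width `w`: one box in each of the `w` columns, all filled with `v`,
in weakly rising (left-to-right) configuration; `f j` is the row of the box in column `j`. -/
def HasIStrip (μ : ℕ → ℕ) (w : ℕ) (T : ℕ → ℕ → ℕ) (v : ℕ) : Prop :=
  ∃ f : ℕ → ℕ, (∀ j k, j ≤ k → k < w → f k ≤ f j) ∧
    ∀ j, j < w → j < μ (f j) ∧ T (f j) j = v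

/-- `(f, m)` is a `(v,v+1)`-strip of width `w`: one box per column, entries `v` in the
first `m` columns and `v+1` thereafter, weakly rising left-to-right. -/
def IsIIStrip (μ : ℕ → ℕ) (w : ℕ) (T : ℕ → ℕ → ℕ) (v : ℕ) (f : ℕ → ℕ) (m : ℕ) : Prop :=
  m ≤ w ∧ (∀ j k, j ≤ k → k < w → f k ≤ f j) ∧ (∀ j, j < w → j < μ (f j)) ∧
  (∀ j, j < m → T (f j) j = v) ∧ (∀ j, m ≤ j → j < w → T (f j) j = v + 1)

def HasIIStrip (μ : ℕ → ℕ) (w : ℕ) (T : ℕ → ℕ → ℕ) (v : ℕ) : Prop :=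
  ∃ f m, IsIIStrip μ w T v f m

/-- 1-strip-less: no `(i)`-strip for `i ∈ {1,…,r}` and no `(i,i+1)`-strip for
`i ∈ {1,…,r-1}`. -/
def OneStripLess (μ : ℕ → ℕ) (w : ℕ) (r : ℕ) (T : ℕ → ℕ → ℕ) : Prop :=
  (∀ v, 1 ≤ v → v ≤ r → ¬ HasIStrip μ w T v) ∧
  (∀ v, 1 ≤ v → v ≤ r - 1 → ¬ HasIIStrip μ w T v)

/-- Number of SSYTs of shape `μ` with entries in `{1,…,r}`. -/
noncomputable def ssytCount (r : ℕ) (μ : ℕ → ℕ) : ℕ :=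
  {T : ℕ → ℕ → ℕ | IsSSYT μ r T ∧ ZeroOutside μ T}.ncard

/-- `μ` with its first `j` parts removed. -/
def shiftPart (μ : ℕ → ℕ) (j : ℕ) : ℕ → ℕ := fun i => μ (i + j)

/-- A standard Young tableau of shape `μ` with entries `1,…,N`. -/
def IsSYT (μ : ℕ → ℕ) (N : ℕ) (T : ℕ → ℕ → ℕ) : Prop :=
  (∀ i j, j < μ i → 1 ≤ T i j ∧ T i j ≤ N) ∧
  (∀ i j i' j', j < μ i → j' < μ i' → T i j = T i' j' → (i, j) = (i', j')) ∧
  (∀ i j, j + 1 < μ i → T i j < T i (j + 1)) ∧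
  (∀ i j, j < μ (i + 1) → T i j < T (i + 1) j)

/-- `k` is a descent of the SYT `T`: the entry `k+1` appears in a strictly lower row. -/
def IsDescent (μ : ℕ → ℕ) (T : ℕ → ℕ → ℕ) (k : ℕ) : Prop :=
  ∃ i j i' j', j < μ i ∧ j' < μ i' ∧ T i j = k ∧ T i' j' = k + 1 ∧ i < i'

/-- With `T'` the SSYT obtained from an SYT `T` of shape `lam` by replacing the entries in
`(d (j-1), d j]` by `j`: for each `v ∈ {1,…,r-1}`, the rightmost box of `T'` containing
`v` does not lie in a column strictly left of the leftmost box containing `v+1`;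
equivalently there are boxes with entries `v` and `v+1` whose columns satisfy `j₂ ≤ j₁`. -/
theorem stmt9 (R : ℕ) (lam : ℕ → ℕ) (hp : IsPartition R lam)
    (N : ℕ) (hN : N = ∑ i ∈ Finset.range R, lam i) (hN1 : 1 ≤ N)
    (T : ℕ → ℕ → ℕ) (hT : IsSYT lam N T) (hz : ZeroOutside lam T)
    (r : ℕ) (hr : 1 ≤ r) (d : ℕ → ℕ)
    (hdmono : ∀ s t, 1 ≤ s → s < t → t ≤ r - 1 → d s < d t)
    (hdrange : ∀ t, 1 ≤ t → t ≤ r - 1 → 1 ≤ d t ∧ d t < N)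
    (hdesc : ∀ k, IsDescent lam T k ↔ ∃ t, 1 ≤ t ∧ t ≤ r - 1 ∧ d t = k) :
    ∀ v, 1 ≤ v → v ≤ r - 1 → ∃ i₁ j₁ i₂ j₂, j₁ < lam i₁ ∧ j₂ < lam i₂ ∧
      ((Finset.Icc 1 (r - 1)).filter (fun t => d t < T i₁ j₁)).card + 1 = v ∧
      ((Finset.Icc 1 (r - 1)).filter (fun t => d t < T i₂ j₂)).card + 1 = v + 1 ∧
      j₂ ≤ j₁ := by
  intro v hv1 hv2
  obtain ⟨i, j, i', j', hj, hj', hTij, hTij', hii'⟩ :=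
    (hdesc (d v)).mpr ⟨v, hv1, hv2, rfl⟩
  -- strict increase along rows
  have hrow : ∀ i a b, a < b → b < lam i → T i a < T i b := by
    intro i a b hab hb
    induction b with
    | zero => omega
    | succ b ih =>
      rcases Nat.lt_or_ge a b with h | h
      · exact (ih h (by omega)).trans (hT.2.2.1 i b hb)
      · have : a = b := by omega
        subst this
        exact hT.2.2.1 i a hb
  -- strict increase down columns
  have hcol : ∀ a b c, a < b → c < lam b → T a c < T b c := by
    intro a b c hab hc
    induction b with
    | zero => omega
    | succ b ih =>
      have hc' : c < lam b := lt_of_lt_of_le hc (hp.1 b (b + 1) (by omega))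
      rcases Nat.lt_or_ge a b with h | h
      · exact (ih h hc').trans (hT.2.2.2 b c hc)
      · have : a = b := by omega
        subst this
        exact hT.2.2.2 a c hc
  have hjj' : j' ≤ j := by
    by_contra hcon
    push_neg at hcon
    have h1 : T i j < T i j' := hrow i j j' hcon (lt_of_lt_of_le hj' (hp.1 i i' hii'.le))
    have h2 : T i j' < T i' j' := hcol i i' j' hii' hj'
    omega
  refine ⟨i, j, i', j', hj, hj', ?_, ?_, hjj'⟩
  · rw [hTij]
    have : (Finset.Icc 1 (r - 1)).filter (fun t => d t < d v) = Finset.Icc 1 (v - 1) := by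
      ext t
      simp only [Finset.mem_filter, Finset.mem_Icc]
      constructor
      · rintro ⟨⟨ht1, ht2⟩, hdt⟩
        refine ⟨ht1, ?_⟩
        by_contra hcon
        push_neg at hcon
        rcases Nat.lt_or_ge v t with h | h
        · exact absurd (hdmono v t hv1 h ht2) (by omega)
        · have : t = v := by omega
          subst this; omega
      · rintro ⟨ht1, ht2⟩
        have htv : t < v := by omega
        exact ⟨⟨ht1, by omega⟩, hdmono t v ht1 htv hv2⟩
    rw [this, Nat.card_Icc]
    omega
  · rw [hTij']
    have : (Finset.Icc 1 (r - 1)).filter (fun t => d t < d v + 1) = Finset.Icc 1 v := by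
      ext t
      simp only [Finset.mem_filter, Finset.mem_Icc]
      constructor
      · rintro ⟨⟨ht1, ht2⟩, hdt⟩
        refine ⟨ht1, ?_⟩
        by_contra hcon
        push_neg at hcon
        exact absurd (hdmono v t hv1 hcon ht2) (by omega)
      · rintro ⟨ht1, ht2⟩
        refine ⟨⟨ht1, by omega⟩, ?_⟩
        rcases Nat.lt_or_ge t v with h | h
        · have := hdmono t v ht1 h hv2
          omega
        · have : t = v := by omega
          subst this; omega
    rw [this, Nat.card_Icc]
    omega
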